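/- Let X and U be real normed spaces, α > 0, and let ψ₁, ψ₂ : [0,∞) → [0,∞) be of class 𝒦∞ with ψ₁⁻¹ denoting the inverse of ψ₁. Let V : [0,∞) × X → [0,∞) satisfy ψ₁(‖x‖) ≤ V(t,x) ≤ ψ₂(‖x‖) for all (t,x) ∈ [0,∞) × X. Let s ≥ 0, T ∈ (s,∞], let x : [s,T) → X be any function and u : [s,T) → U be continuous, and suppose that h(t) := V(t, x(t)) is differentiable at every t ∈ [s,T) with h′(t) ≤ α‖u(t)‖². Then for every t ∈ [s,T): ‖x(t)‖ ≤ ψ₁⁻¹(2 ψ₂(‖x(s)‖)) + ψ₁⁻¹(2α ∫_s^t ‖u(τ)‖² dτ). -/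
import Mathlib


/-- A function `ψ : [0,∞) → [0,∞)` is of class `𝒦∞` iff it is continuous,
strictly increasing, unbounded and `ψ 0 = 0`. -/
def ClassKInfty (ψ : ℝ → ℝ) : Prop :=
  ContinuousOn ψ (Set.Ici 0) ∧ StrictMonoOn ψ (Set.Ici 0) ∧ ψ 0 = 0 ∧
    (∀ r : ℝ, 0 ≤ r → 0 ≤ ψ r) ∧ (∀ M : ℝ, ∃ r : ℝ, 0 ≤ r ∧ M ≤ ψ r)

/-- Uniform global stability estimate (first step of the proofs of Lemmas 3.3 and 4.3):
if `V` is sandwiched between `ψ₁(‖·‖)` and `ψ₂(‖·‖)` and `t ↦ V(t,x(t))` dissipates with rate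
at most `α‖u(t)‖²` on `[s,T)`, then `‖x(t)‖ ≤ ψ₁⁻¹(2ψ₂(‖x(s)‖)) + ψ₁⁻¹(2α∫ₛᵗ‖u‖²)`. -/
theorem uniform_global_stability_estimate
    {X U : Type*} [NormedAddCommGroup X] [NormedSpace ℝ X]
    [NormedAddCommGroup U] [NormedSpace ℝ U]
    (α : ℝ) (hα : 0 < α)
    (ψ₁ ψ₂ : ℝ → ℝ) (hψ₁ : ClassKInfty ψ₁) (hψ₂ : ClassKInfty ψ₂)
    (ψ₁inv : ℝ → ℝ)
    (hinv₁ : ∀ r : ℝ, 0 ≤ r → ψ₁inv (ψ₁ r) = r)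
    (hinv₂ : ∀ r : ℝ, 0 ≤ r → ψ₁ (ψ₁inv r) = r)
    (V : ℝ → X → ℝ)
    (hV : ∀ t : ℝ, 0 ≤ t → ∀ x : X, ψ₁ ‖x‖ ≤ V t x ∧ V t x ≤ ψ₂ ‖x‖)
    (s : ℝ) (hs : 0 ≤ s) (T : EReal) (hsT : (s : EReal) < T)
    (x : ℝ → X) (u : ℝ → U)
    (hu : ContinuousOn u {τ : ℝ | s ≤ τ ∧ (τ : EReal) < T})
    (h' : ℝ → ℝ)
    (hderiv : ∀ t : ℝ, s ≤ t → (t : EReal) < T →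
      HasDerivAt (fun τ => V τ (x τ)) (h' t) t ∧ h' t ≤ α * ‖u t‖ ^ 2) :
    ∀ t : ℝ, s ≤ t → (t : EReal) < T →
      ‖x t‖ ≤ ψ₁inv (2 * ψ₂ ‖x s‖) + ψ₁inv (2 * α * ∫ τ in s..t, ‖u τ‖ ^ 2) := by
  -- key property of the inverse: for M ≥ 0, ψ₁inv M ≥ 0 and bounds any r with ψ₁ r ≤ M.
  have key : ∀ M : ℝ, 0 ≤ M → 0 ≤ ψ₁inv M ∧ ∀ r : ℝ, 0 ≤ r → ψ₁ r ≤ M → r ≤ ψ₁inv M := by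
    intro M hM
    obtain ⟨R, hR0, hMR⟩ := hψ₁.2.2.2.2 M
    have hsub : Set.Icc (0:ℝ) R ⊆ Set.Ici 0 := fun y hy => hy.1
    have hIVT := intermediate_value_Icc hR0 (hψ₁.1.mono hsub)
    have hMmem : M ∈ Set.Icc (ψ₁ 0) (ψ₁ R) := by
      constructor
      · rw [hψ₁.2.2.1]; exact hM
      · exact hMR
    obtain ⟨r₀, hr₀mem, hr₀⟩ := hIVT hMmem
    have hinvM : ψ₁inv M = r₀ := by rw [← hr₀, hinv₁ r₀ hr₀mem.1]
    refine ⟨by rw [hinvM]; exact hr₀mem.1, ?_⟩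
    intro r hr hrM
    rw [hinvM]
    by_contra hlt
    push_neg at hlt
    have := hψ₁.2.1 hr₀mem.1 hr hlt
    rw [hr₀] at this
    linarith
  intro t hst htT
  set S : Set ℝ := {τ : ℝ | s ≤ τ ∧ (τ : EReal) < T} with hS
  have hsubS : Set.Icc s t ⊆ S := by
    intro τ hτ
    exact ⟨hτ.1, lt_of_le_of_lt (EReal.coe_le_coe_iff.2 hτ.2) htT⟩
  set f : ℝ → ℝ := fun τ => ‖u τ‖ ^ 2 with hf
  have hfc : ContinuousOn f (Set.Icc s t) := ((hu.mono hsubS).norm.pow 2)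
  have hfint : ∀ τ ∈ Set.Icc s t, IntervalIntegrable f MeasureTheory.volume s τ := by
    intro τ hτ
    apply ContinuousOn.intervalIntegrable
    apply hfc.mono
    rw [Set.uIcc_of_le hτ.1]
    exact Set.Icc_subset_Icc_right hτ.2
  set F : ℝ → ℝ := fun τ => ∫ σ in s..τ, f σ with hF
  have hFc : ContinuousOn F (Set.Icc s t) := by
    have h1 : IntervalIntegrable f MeasureTheory.volume s t := hfint t (Set.right_mem_Icc.2 hst)
    have := intervalIntegral.continuousOn_primitive_interval' h1 Set.left_mem_uIcc
    rwa [Set.uIcc_of_le hst] at this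
  -- open set for interior derivative arguments
  set O : Set ℝ := Set.Ioi s ∩ {τ : ℝ | (τ : EReal) < T} with hO
  have hOopen : IsOpen O := by
    apply isOpen_Ioi.inter
    exact isOpen_Iio.preimage continuous_coe_real_ereal
  have hOS : O ⊆ S := fun τ hτ => ⟨le_of_lt hτ.1, hτ.2⟩
  have hfO : ContinuousOn f O := ((hu.mono hOS).norm.pow 2)
  have hFd : ∀ τ ∈ Set.Ioo s t, HasDerivAt F (f τ) τ := by
    intro τ hτ
    have hτO : τ ∈ O := ⟨hτ.1, lt_of_le_of_lt (EReal.coe_le_coe_iff.2 hτ.2.le) htT⟩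
    exact intervalIntegral.integral_hasDerivAt_right
      (hfint τ ⟨hτ.1.le, hτ.2.le⟩)
      (hfO.stronglyMeasurableAtFilter hOopen τ hτO)
      (hfO.continuousAt (hOopen.mem_nhds hτO))
  set g : ℝ → ℝ := fun τ => V τ (x τ) - α * F τ with hg
  have hgc : ContinuousOn g (Set.Icc s t) := by
    apply ContinuousOn.sub
    · intro τ hτ
      have hτS := hsubS hτ
      exact ((hderiv τ hτS.1 hτS.2).1.continuousAt).continuousWithinAt
    · exact continuousOn_const.mul hFc
  have hgd : ∀ τ ∈ Set.Ioo s t, HasDerivAt g (h' τ - α * f τ) τ := by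
    intro τ hτ
    have hτS := hsubS ⟨hτ.1.le, hτ.2.le⟩
    exact ((hderiv τ hτS.1 hτS.2).1).sub ((hFd τ hτ).const_mul α)
  have hanti : AntitoneOn g (Set.Icc s t) := by
    apply antitoneOn_of_deriv_nonpos (convex_Icc s t) hgc
    · intro τ hτ
      rw [interior_Icc] at hτ
      exact (hgd τ hτ).differentiableAt.differentiableWithinAt
    · intro τ hτ
      rw [interior_Icc] at hτ
      rw [(hgd τ hτ).deriv]
      have hτS := hsubS ⟨hτ.1.le, hτ.2.le⟩
      have := (hderiv τ hτS.1 hτS.2).2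
      simp only [hf]
      linarith
  have hgt : g t ≤ g s :=
    hanti (Set.left_mem_Icc.2 hst) (Set.right_mem_Icc.2 hst) hst
  have hFs : F s = 0 := intervalIntegral.integral_same
  have hI : 0 ≤ F t := by
    apply intervalIntegral.integral_nonneg hst
    intro τ _
    positivity
  have hVt := hV t (hs.trans hst) (x t)
  have hVs := hV s hs (x s)
  have hmain : ψ₁ ‖x t‖ ≤ ψ₂ ‖x s‖ + α * F t := by
    simp only [hg, hFs, mul_zero, sub_zero] at hgt
    linarith [hVt.1, hVs.2]
  have hψ₂n : 0 ≤ ψ₂ ‖x s‖ := hψ₂.2.2.2.1 _ (norm_nonneg _)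
  have hM₂ : (0:ℝ) ≤ 2 * α * F t := by positivity
  rcases le_total (α * F t) (ψ₂ ‖x s‖) with hc | hc
  · have h1 : ψ₁ ‖x t‖ ≤ 2 * ψ₂ ‖x s‖ := by linarith
    have h2 := (key (2 * ψ₂ ‖x s‖) (by linarith)).2 _ (norm_nonneg _) h1
    have h3 := (key _ hM₂).1
    show ‖x t‖ ≤ ψ₁inv (2 * ψ₂ ‖x s‖) + ψ₁inv (2 * α * F t)
    linarith
  · have h1 : ψ₁ ‖x t‖ ≤ 2 * α * F t := by linarith
    have h2 := (key _ hM₂).2 _ (norm_nonneg _) h1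
    have h3 := (key (2 * ψ₂ ‖x s‖) (by linarith)).1
    show ‖x t‖ ≤ ψ₁inv (2 * ψ₂ ‖x s‖) + ψ₁inv (2 * α * F t)
    linarith
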